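/- (Lower bound on G_N off the convex region) Let δ ∈ (0, 1/3), κ = min(δ/2, μ−1), and let G_N, Q_N be as defined below. Then there exists c ∈ ℝ, independent of N and R, such that for every N ∈ ℕ, R > 0 and every x ∈ ℝ^N with (1/N)Σ_k(x_k − x̄)² ≤ R² and δ ≤ x̄² ≤ (1/2)(1 − δ): G_N(x) ≥ N·(δ²/(4κ) − c·R²) + Q_N(x). -/

import Mathlib

open Real Finset

noncomputable section

/-- The normalized discrete Laplacian with periodic boundary conditions. -/
def Kd (μ : ℝ) (N : ℕ) (hN : N ≠ 0) (x : Fin N → ℝ) : Fin N → ℝ :=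
  haveI : NeZero N := ⟨hN⟩
  fun k => μ / (4 * Real.sin (π / N) ^ 2) * (2 * x k - x (k + 1) - x (k - 1))

/-- The double-well energy `V_N(x) = ∑ₖ (1/4)(xₖ²−1)² + (1/2)⟨x, Kx⟩`. -/
def V (μ : ℝ) (N : ℕ) (hN : N ≠ 0) (x : Fin N → ℝ) : ℝ :=
  ∑ k, (1 / 4 : ℝ) * (x k ^ 2 - 1) ^ 2 + (1 / 2 : ℝ) * ∑ k, x k * Kd μ N hN x k

/-- The average `x̄` of a vector. -/
def avg (N : ℕ) (x : Fin N → ℝ) : ℝ := (∑ k, x k) / N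

/-- `Q_N(x) = (κ/2)N x̄² + (1/2)⟨x − x̄, (K − 1)(x − x̄)⟩`. -/
def QN (μ κ : ℝ) (N : ℕ) (hN : N ≠ 0) (x : Fin N → ℝ) : ℝ :=
  κ / 2 * N * avg N x ^ 2
    + 1 / 2 * ∑ k, (x k - avg N x) *
        (Kd μ N hN (fun j => x j - avg N x) k - (x k - avg N x))

/-- `U_N(x) = V_N(x) + ((1+κ)/2)N x̄² − N/4`. -/
def UN (μ κ : ℝ) (N : ℕ) (hN : N ≠ 0) (x : Fin N → ℝ) : ℝ :=
  V μ N hN x + (1 + κ) / 2 * N * avg N x ^ 2 - (N : ℝ) / 4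

/-- `G_N = (1/(2κ))(|∇V_N|² − |∇U_N|²) + U_N`. -/
def GN (μ κ : ℝ) (N : ℕ) (hN : N ≠ 0) (x : EuclideanSpace ℝ (Fin N)) : ℝ :=
  1 / (2 * κ) *
      (‖gradient (fun y : EuclideanSpace ℝ (Fin N) => V μ N hN y) x‖ ^ 2
        - ‖gradient (fun y : EuclideanSpace ℝ (Fin N) => UN μ κ N hN y) x‖ ^ 2)
    + UN μ κ N hN x

/-! ### Auxiliary machinery -/


def prj {N : ℕ} (k : Fin N) : EuclideanSpace ℝ (Fin N) →L[ℝ] ℝ := EuclideanSpace.proj k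

def DK (μ : ℝ) (N : ℕ) (hN : N ≠ 0) (k : Fin N) : EuclideanSpace ℝ (Fin N) →L[ℝ] ℝ :=
  haveI : NeZero N := ⟨hN⟩
  (μ / (4 * Real.sin (π / N) ^ 2)) • ((2:ℝ) • prj k - prj (k+1) - prj (k-1))

variable {μ : ℝ} {N : ℕ}

lemma sum_shift [NeZero N] (f : Fin N → ℝ) (a : Fin N) :
    ∑ k : Fin N, f (k + a) = ∑ k : Fin N, f k :=
  Fintype.sum_equiv (Equiv.addRight a) _ _ (fun _ => rfl)

lemma Kd_expand (hN : N ≠ 0) (x v : Fin N → ℝ) :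
    haveI : NeZero N := ⟨hN⟩
    ∑ k, x k * Kd μ N hN v k =
      μ / (4 * Real.sin (π / N) ^ 2) * (2 * ∑ k, x k * v k)
      - μ / (4 * Real.sin (π / N) ^ 2) * ∑ k : Fin N, x k * v (k + 1)
      - μ / (4 * Real.sin (π / N) ^ 2) * ∑ k : Fin N, x k * v (k - 1) := by
  haveI : NeZero N := ⟨hN⟩
  have h : ∀ k : Fin N, x k * Kd μ N hN v k =
      μ / (4 * Real.sin (π / N) ^ 2) * (2 * (x k * v k))
      - μ / (4 * Real.sin (π / N) ^ 2) * (x k * v (k + 1))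
      - μ / (4 * Real.sin (π / N) ^ 2) * (x k * v (k - 1)) := fun k => by
    unfold Kd; ring
  simp_rw [h, Finset.sum_sub_distrib, ← Finset.mul_sum]

lemma Ksym (hN : N ≠ 0) (x v : Fin N → ℝ) :
    ∑ k, x k * Kd μ N hN v k = ∑ k, Kd μ N hN x k * v k := by
  haveI : NeZero N := ⟨hN⟩
  have h1 : ∑ k : Fin N, x k * v (k + 1) = ∑ k : Fin N, x (k - 1) * v k := by
    rw [← sum_shift (fun k => x (k - 1) * v k) 1]; simp
  have h2 : ∑ k : Fin N, x k * v (k - 1) = ∑ k : Fin N, x (k + 1) * v k := by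
    rw [← sum_shift (fun k => x k * v (k - 1)) 1]; simp
  have e1 := Kd_expand (μ := μ) hN x v
  have e2 := Kd_expand (μ := μ) hN v x
  simp only [mul_comm (Kd μ N hN x _) (v _)] at *
  rw [e1, e2, h1, h2]
  have h3 : ∑ k : Fin N, v k * x (k + 1) = ∑ k : Fin N, x (k+1) * v k :=
    Finset.sum_congr rfl fun k _ => mul_comm _ _
  have h4 : ∑ k : Fin N, v k * x (k - 1) = ∑ k : Fin N, x (k-1) * v k :=
    Finset.sum_congr rfl fun k _ => mul_comm _ _
  have h5 : ∑ k : Fin N, v k * x k = ∑ k : Fin N, x k * v k :=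
    Finset.sum_congr rfl fun k _ => mul_comm _ _
  rw [h3, h4, h5]; ring

lemma sum_Kd (hN : N ≠ 0) (x : Fin N → ℝ) : ∑ k, Kd μ N hN x k = 0 := by
  haveI : NeZero N := ⟨hN⟩
  have h := Ksym (μ := μ) hN (fun _ => 1) x
  simp only [one_mul] at h
  rw [h]; unfold Kd; norm_num

lemma proj_hasFDerivAt (k : Fin N) (x : EuclideanSpace ℝ (Fin N)) :
    HasFDerivAt (fun y : EuclideanSpace ℝ (Fin N) => y k) (prj k) x :=
  (prj k).hasFDerivAt

lemma hasFDerivV (hN : N ≠ 0) (x : EuclideanSpace ℝ (Fin N)) :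
    HasFDerivAt (fun y : EuclideanSpace ℝ (Fin N) => V μ N hN y)
      ((∑ k, (x k ^ 3 - x k) • prj k)
        + (1 / 2 : ℝ) • ∑ k, (x k • DK μ N hN k + Kd μ N hN x k • prj k)) x := by
  haveI : NeZero N := ⟨hN⟩
  have hp : ∀ k : Fin N, HasFDerivAt (fun y : EuclideanSpace ℝ (Fin N) => y k)
      (prj k) x := fun k => proj_hasFDerivAt k x
  have hquart : ∀ k : Fin N, HasFDerivAt
      (fun y : EuclideanSpace ℝ (Fin N) => (1/4:ℝ) * (y k ^ 2 - 1)^2)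
      ((x k ^ 3 - x k) • prj k) x := by
    intro k
    have hd : HasDerivAt (fun t : ℝ => (1/4:ℝ) * (t^2 - 1)^2) (x k ^ 3 - x k) (x k) := by
      have h := (((hasDerivAt_pow 2 (x k)).sub_const 1).pow 2).const_mul (1/4:ℝ)
      have he : (1/4:ℝ) * (((2:ℕ):ℝ) * (x k ^2 - 1) ^ (2-1) * (((2:ℕ):ℝ) * x k ^ (2-1)))
          = x k ^ 3 - x k := by push_cast; ring
      rwa [he] at h
    have := hd.comp_hasFDerivAt x (hp k); exact this
  have hKd : ∀ k : Fin N, HasFDerivAt (fun y : EuclideanSpace ℝ (Fin N) => Kd μ N hN y k)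
      (DK μ N hN k) x := fun k =>
    ((((hp k).const_mul (2:ℝ)).sub (hp (k+1))).sub (hp (k-1))).const_mul _
  have hquad : ∀ k : Fin N, HasFDerivAt
      (fun y : EuclideanSpace ℝ (Fin N) => y k * Kd μ N hN y k)
      (x k • DK μ N hN k + Kd μ N hN x k • prj k) x := fun k => (hp k).mul (hKd k)
  have h1 := HasFDerivAt.fun_sum (fun k (_ : k ∈ Finset.univ) => hquart k)
  have h2 := (HasFDerivAt.fun_sum (fun k (_ : k ∈ Finset.univ) => hquad k)).const_mul (1/2:ℝ)
  exact h1.add h2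

def gV (μ : ℝ) (N : ℕ) (hN : N ≠ 0) (x : EuclideanSpace ℝ (Fin N)) :
    EuclideanSpace ℝ (Fin N) :=
  WithLp.toLp 2 (fun k => x k ^ 3 - x k + Kd μ N hN x k)

lemma hasGradV (hN : N ≠ 0) (x : EuclideanSpace ℝ (Fin N)) :
    HasGradientAt (fun y : EuclideanSpace ℝ (Fin N) => V μ N hN y) (gV μ N hN x) x := by
  haveI : NeZero N := ⟨hN⟩
  rw [hasGradientAt_iff_hasFDerivAt]
  have heq : (InnerProductSpace.toDual ℝ (EuclideanSpace ℝ (Fin N)) (gV μ N hN x) :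
      EuclideanSpace ℝ (Fin N) →L[ℝ] ℝ) =
      ((∑ k, (x k ^ 3 - x k) • prj k)
        + (1 / 2 : ℝ) • ∑ k, (x k • DK μ N hN k + Kd μ N hN x k • prj k)) := by
    ext v
    have key : ∑ k, gV μ N hN x k * v k
        = ∑ k, (x k ^ 3 - x k) * v k
          + (1/2:ℝ) * ∑ k, (x k * Kd μ N hN v k + Kd μ N hN x k * v k) := by
      have hs := Ksym (μ := μ) hN x v
      simp only [gV, PiLp.toLp_apply, add_mul, sub_mul, Finset.sum_add_distrib, hs]
      ring
    simp only [InnerProductSpace.toDual_apply_apply, PiLp.inner_apply, RCLike.inner_apply,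
      conj_trivial, ContinuousLinearMap.add_apply, ContinuousLinearMap.coe_sum',
      Finset.sum_apply, ContinuousLinearMap.smul_apply, ContinuousLinearMap.sub_apply,
      smul_eq_mul]
    convert key using 2 with k
    · exact mul_comm _ _
    · rfl
    · rfl
  rw [heq]
  exact hasFDerivV hN x

def gU (μ κ : ℝ) (N : ℕ) (hN : N ≠ 0) (x : EuclideanSpace ℝ (Fin N)) :
    EuclideanSpace ℝ (Fin N) :=
  WithLp.toLp 2 (fun k => gV μ N hN x k + (1 + κ) * avg N x)

lemma hasGradU (κ : ℝ) (hN : N ≠ 0) (x : EuclideanSpace ℝ (Fin N)) :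
    HasGradientAt (fun y : EuclideanSpace ℝ (Fin N) => UN μ κ N hN y) (gU μ κ N hN x) x := by
  haveI : NeZero N := ⟨hN⟩
  have hNR : (N : ℝ) ≠ 0 := Nat.cast_ne_zero.mpr hN
  rw [hasGradientAt_iff_hasFDerivAt]
  have hs : HasFDerivAt (fun y : EuclideanSpace ℝ (Fin N) => ∑ k, y k)
      (∑ k : Fin N, prj k) x := HasFDerivAt.fun_sum (fun k _ => proj_hasFDerivAt k x)
  have hd : HasDerivAt (fun t : ℝ => (1 + κ) / 2 * N * (t / N) ^ 2)
      ((1 + κ) * avg N x) (∑ k, x k) := by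
    have h := (((hasDerivAt_id (∑ k, x k)).div_const (N : ℝ)).pow 2).const_mul
      ((1 + κ) / 2 * (N : ℝ))
    have he : (1 + κ) / 2 * (N:ℝ) * (((2:ℕ):ℝ) * ((∑ k, x k) / N) ^ (2-1) * (1 / N))
        = (1 + κ) * avg N x := by
      unfold avg; push_cast; field_simp
    simp only [id_eq] at h
    rwa [he] at h
  have hW : HasFDerivAt
      (fun y : EuclideanSpace ℝ (Fin N) => (1 + κ) / 2 * N * avg N y ^ 2)
      (((1 + κ) * avg N x) • (∑ k : Fin N, prj k)) x := by
    have := hd.comp_hasFDerivAt x hs; exact this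
  have hU := ((hasFDerivV (μ := μ) hN x).add hW).sub_const ((N : ℝ) / 4)
  have heq : (InnerProductSpace.toDual ℝ (EuclideanSpace ℝ (Fin N)) (gU μ κ N hN x) :
      EuclideanSpace ℝ (Fin N) →L[ℝ] ℝ) =
      (((∑ k, (x k ^ 3 - x k) • prj k)
        + (1 / 2 : ℝ) • ∑ k, (x k • DK μ N hN k + Kd μ N hN x k • prj k))
        + ((1 + κ) * avg N x) • (∑ k : Fin N, prj k)) := by
    have h1 := (hasGradV (μ := μ) hN x).hasFDerivAt
    have h2 := hasFDerivV (μ := μ) hN x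
    have h3 : (InnerProductSpace.toDual ℝ (EuclideanSpace ℝ (Fin N)) (gV μ N hN x) :
        EuclideanSpace ℝ (Fin N) →L[ℝ] ℝ) =
        ((∑ k, (x k ^ 3 - x k) • prj k)
          + (1 / 2 : ℝ) • ∑ k, (x k • DK μ N hN k + Kd μ N hN x k • prj k)) :=
      h1.unique h2
    rw [← h3]
    ext v
    simp only [InnerProductSpace.toDual_apply_apply, PiLp.inner_apply, RCLike.inner_apply,
      conj_trivial, ContinuousLinearMap.add_apply, ContinuousLinearMap.coe_sum',
      Finset.sum_apply, ContinuousLinearMap.smul_apply, smul_eq_mul, gU, PiLp.toLp_apply, prj,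
      PiLp.proj_apply, add_mul, Finset.sum_add_distrib, Finset.mul_sum]
    simp only [mul_comm (v.ofLp _), add_mul, Finset.sum_add_distrib]
  rw [heq]
  exact hU

lemma norm_sq_eq_sum' (g : EuclideanSpace ℝ (Fin N)) : ‖g‖ ^ 2 = ∑ k, g k ^ 2 := by
  rw [EuclideanSpace.norm_eq, Real.sq_sqrt (by positivity)]
  simp [Real.norm_eq_abs, sq_abs]

lemma GN_val (κ : ℝ) (hN : N ≠ 0) (x : EuclideanSpace ℝ (Fin N)) :
    GN μ κ N hN x = 1 / (2 * κ) *
        ((∑ k, gV μ N hN x k ^ 2) - ∑ k, gU μ κ N hN x k ^ 2) + UN μ κ N hN x := by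
  unfold GN
  rw [(hasGradV hN x).gradient, (hasGradU κ hN x).gradient, norm_sq_eq_sum',
    norm_sq_eq_sum']

lemma sum_gU_sq (κ : ℝ) (hN : N ≠ 0) (x : EuclideanSpace ℝ (Fin N)) :
    ∑ k, gU μ κ N hN x k ^ 2
      = ∑ k, gV μ N hN x k ^ 2 + 2 * ((1 + κ) * avg N x) * (∑ k, gV μ N hN x k)
        + N * ((1 + κ) * avg N x) ^ 2 := by
  have hp : ∀ k : Fin N, gU μ κ N hN x k ^ 2
      = gV μ N hN x k ^ 2 + 2 * ((1 + κ) * avg N x) * gV μ N hN x k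
        + ((1 + κ) * avg N x) ^ 2 := fun k => by unfold gU; simp only [PiLp.toLp_apply]; ring
  rw [Finset.sum_congr rfl (fun k _ => hp k)]
  simp [Finset.sum_add_distrib, ← Finset.mul_sum, Finset.sum_const, Finset.card_univ,
    nsmul_eq_mul]

lemma sum_gV (hN : N ≠ 0) (x : EuclideanSpace ℝ (Fin N)) :
    ∑ k, gV μ N hN x k = (∑ k, x k ^ 3) - ∑ k, x k := by
  unfold gV
  simp [Finset.sum_add_distrib, Finset.sum_sub_distrib, sum_Kd hN x]

/-- Scalar form of the inequality. -/
lemma scalar_ineq (κ δ R m S2 S3 S4 n : ℝ) (hκ0 : 0 < κ) (hκδ : κ ≤ δ / 2)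
    (hδ0 : 0 < δ) (hδ3 : δ < 1 / 3) (hS2 : 0 ≤ S2) (hS4 : 0 ≤ S4)
    (hS2R : S2 ≤ n * R ^ 2) (hm1 : δ ≤ m ^ 2) (hm2 : m ^ 2 ≤ 1 / 2 * (1 - δ))
    (hn : 0 ≤ n)
    (hAM : m * S3 ≤ 1 / κ * m ^ 2 * S2 + κ / 4 * S4) :
    n * (1 / (2 * κ) * (1 - κ ^ 2) * m ^ 2 - (4 + 3 * κ) / (4 * κ) * m ^ 4)
      + (S4 / 4 - m / κ * S3 - 3 * (2 + κ) / (2 * κ) * m ^ 2 * S2)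
    ≥ n * (δ ^ 2 / (4 * κ) - (1 / (2 * κ ^ 2) + 3 * (2 + κ) / (4 * κ)) * R ^ 2) := by
  have hκ6 : κ ≤ 1 / 6 := by nlinarith
  have hθ : δ / 2 ≤ 1 - κ ^ 2 - (4 + 3 * κ) / 2 * m ^ 2 := by
    have a1 : (4 + 3 * κ) / 2 * m ^ 2 ≤ (4 + 3 * κ) / 2 * (1 / 2 * (1 - δ)) :=
      mul_le_mul_of_nonneg_left hm2 (by positivity)
    have a2 : κ * κ ≤ δ / 2 * (δ / 2) := mul_le_mul hκδ hκδ hκ0.le (by positivity)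
    have a3 : 0 ≤ κ * δ := mul_nonneg hκ0.le hδ0.le
    have a4 : δ * δ ≤ δ * (1 / 3) := mul_le_mul_of_nonneg_left hδ3.le hδ0.le
    nlinarith [a1, a2, a3, a4]
  have hm0 : 0 ≤ m ^ 2 := sq_nonneg m
  have hP : δ ^ 2 / (4 * κ) ≤
      1 / (2 * κ) * (1 - κ ^ 2) * m ^ 2 - (4 + 3 * κ) / (4 * κ) * m ^ 4 := by
    have h1 : δ * (δ / 2) ≤ m ^ 2 * (1 - κ ^ 2 - (4 + 3 * κ) / 2 * m ^ 2) := by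
      have := mul_le_mul hm1 hθ (by positivity) hm0
      linarith [this]
    have h2 : 1 / (2 * κ) * (1 - κ ^ 2) * m ^ 2 - (4 + 3 * κ) / (4 * κ) * m ^ 4
        = (m ^ 2 * (1 - κ ^ 2 - (4 + 3 * κ) / 2 * m ^ 2)) / (2 * κ) := by
      field_simp; ring
    have h3 : δ ^ 2 / (4 * κ) = (δ * (δ / 2)) / (2 * κ) := by ring
    rw [h2, h3]
    exact div_le_div_of_nonneg_right h1 (by positivity)
  have hc : (0:ℝ) ≤ 1 / (2 * κ ^ 2) + 3 * (2 + κ) / (4 * κ) := by positivity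
  have hH : S4 / 4 - m / κ * S3 - 3 * (2 + κ) / (2 * κ) * m ^ 2 * S2
      ≥ -(1 / (2 * κ ^ 2) + 3 * (2 + κ) / (4 * κ)) * (n * R ^ 2) := by
    have hAM2 : m / κ * S3 ≤ 1 / κ ^ 2 * m ^ 2 * S2 + S4 / 4 := by
      have := mul_le_mul_of_nonneg_left hAM (le_of_lt (inv_pos.mpr hκ0))
      have he1 : κ⁻¹ * (m * S3) = m / κ * S3 := by field_simp
      have he2 : κ⁻¹ * (1 / κ * m ^ 2 * S2 + κ / 4 * S4)
          = 1 / κ ^ 2 * m ^ 2 * S2 + S4 / 4 := by field_simp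
      rw [he1, he2] at this; exact this
    have hcoef : (0:ℝ) ≤ 1 / κ ^ 2 + 3 * (2 + κ) / (2 * κ) := by positivity
    have hm12 : m ^ 2 ≤ 1 / 2 := by nlinarith
    have hb : (1 / κ ^ 2 + 3 * (2 + κ) / (2 * κ)) * m ^ 2 * S2
        ≤ (1 / (2 * κ ^ 2) + 3 * (2 + κ) / (4 * κ)) * S2 := by
      have h4 := mul_le_mul_of_nonneg_left hm12 hcoef
      have h5 := mul_le_mul_of_nonneg_right h4 hS2
      calc (1 / κ ^ 2 + 3 * (2 + κ) / (2 * κ)) * m ^ 2 * S2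
          ≤ (1 / κ ^ 2 + 3 * (2 + κ) / (2 * κ)) * (1/2) * S2 := h5
        _ = (1 / (2 * κ ^ 2) + 3 * (2 + κ) / (4 * κ)) * S2 := by ring
    have hb2 : (1 / (2 * κ ^ 2) + 3 * (2 + κ) / (4 * κ)) * S2
        ≤ (1 / (2 * κ ^ 2) + 3 * (2 + κ) / (4 * κ)) * (n * R ^ 2) :=
      mul_le_mul_of_nonneg_left hS2R hc
    nlinarith [mul_nonneg hcoef hS2]
  have hnP := mul_le_mul_of_nonneg_left hP hn
  have expand : n * (δ ^ 2 / (4 * κ) - (1 / (2 * κ ^ 2) + 3 * (2 + κ) / (4 * κ)) * R ^ 2)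
      = n * (δ ^ 2 / (4 * κ)) - (1 / (2 * κ ^ 2) + 3 * (2 + κ) / (4 * κ)) * (n * R ^ 2) := by
    ring
  linarith [hnP, hH, expand]

/-- The key algebraic identity: `G_N − Q_N = N·P(x̄) + H_N`. -/
lemma GN_sub_QN (κ : ℝ) (hκ0 : κ ≠ 0) (hN : N ≠ 0) (x : EuclideanSpace ℝ (Fin N)) :
    GN μ κ N hN x
      = (N : ℝ) * (1 / (2 * κ) * (1 - κ ^ 2) * avg N x ^ 2
          - (4 + 3 * κ) / (4 * κ) * avg N x ^ 4)
        + ((∑ k, (x k - avg N x) ^ 4) / 4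
          - avg N x / κ * (∑ k, (x k - avg N x) ^ 3)
          - 3 * (2 + κ) / (2 * κ) * avg N x ^ 2 * (∑ k, (x k - avg N x) ^ 2))
        + QN μ κ N hN x := by
  haveI : NeZero N := ⟨hN⟩
  have hNr : (N : ℝ) ≠ 0 := Nat.cast_ne_zero.mpr hN
  have h_sumx : ∑ k, x k = (N : ℝ) * avg N x := by
    unfold avg; field_simp
  have h_sumy : ∑ k : Fin N, (x k - avg N x) = 0 := by
    rw [Finset.sum_sub_distrib, Finset.sum_const, Finset.card_univ, Fintype.card_fin,
      h_sumx, nsmul_eq_mul]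
    ring
  -- expansions of power sums
  have hx3 : ∑ k, x k ^ 3
      = (∑ k, (x k - avg N x) ^ 3) + 3 * avg N x * (∑ k, (x k - avg N x) ^ 2)
        + (N : ℝ) * avg N x ^ 3 := by
    have hp : ∀ k : Fin N, x k ^ 3
        = (x k - avg N x) ^ 3 + 3 * avg N x * (x k - avg N x) ^ 2
          + 3 * avg N x ^ 2 * (x k - avg N x) + avg N x ^ 3 := fun k => by ring
    rw [Finset.sum_congr rfl (fun k _ => hp k)]
    simp [Finset.sum_add_distrib, ← Finset.mul_sum, h_sumy, Finset.sum_const,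
      Finset.card_univ, nsmul_eq_mul]
  have hx4 : ∑ k, (x k ^ 2 - 1) ^ 2
      = (∑ k, (x k - avg N x) ^ 4) + 4 * avg N x * (∑ k, (x k - avg N x) ^ 3)
        + 6 * avg N x ^ 2 * (∑ k, (x k - avg N x) ^ 2)
        - 2 * (∑ k, (x k - avg N x) ^ 2)
        + (N : ℝ) * (avg N x ^ 4 - 2 * avg N x ^ 2 + 1) := by
    have hp : ∀ k : Fin N, (x k ^ 2 - 1) ^ 2
        = (x k - avg N x) ^ 4 + 4 * avg N x * (x k - avg N x) ^ 3
          + 6 * avg N x ^ 2 * (x k - avg N x) ^ 2 - 2 * (x k - avg N x) ^ 2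
          + (4 * avg N x ^ 3 - 4 * avg N x) * (x k - avg N x)
          + (avg N x ^ 4 - 2 * avg N x ^ 2 + 1) := fun k => by ring
    rw [Finset.sum_congr rfl (fun k _ => hp k)]
    simp [Finset.sum_add_distrib, Finset.sum_sub_distrib, ← Finset.mul_sum, h_sumy,
      Finset.sum_const, Finset.card_univ, nsmul_eq_mul]
    ring
  -- the quadratic form in Q_N
  have hKdy : ∀ k : Fin N, Kd μ N hN (fun j => x j - avg N x) k = Kd μ N hN x k :=
    fun k => by unfold Kd; ring
  have hQquad : ∑ k, (x k - avg N x) *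
        (Kd μ N hN (fun j => x j - avg N x) k - (x k - avg N x))
      = (∑ k, x k * Kd μ N hN x k) - ∑ k, (x k - avg N x) ^ 2 := by
    have hp : ∀ k : Fin N, (x k - avg N x) *
          (Kd μ N hN (fun j => x j - avg N x) k - (x k - avg N x))
        = x k * Kd μ N hN x k - avg N x * Kd μ N hN x k - (x k - avg N x) ^ 2 :=
      fun k => by rw [hKdy k]; ring
    rw [Finset.sum_congr rfl (fun k _ => hp k)]
    simp [Finset.sum_sub_distrib, ← Finset.mul_sum, sum_Kd hN x]
  -- V in terms of the new variables
  have hV : V μ N hN x = (1/4 : ℝ) * ∑ k, (x k ^ 2 - 1) ^ 2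
      + (1/2 : ℝ) * ∑ k, x k * Kd μ N hN x k := by
    unfold V; rw [Finset.mul_sum, Finset.mul_sum]
  rw [GN_val κ hN x, sum_gU_sq κ hN x, sum_gV hN x, hx3, h_sumx]
  unfold UN QN
  rw [hV, hx4, hQquad]
  field_simp
  ring

/-- Lower bound on `G_N` off the convex region: for `δ ∈ (0,1/3)`, `κ = min(δ/2, μ−1)`,
there is `c`, independent of `N` and `R`, with
`G_N(x) ≥ N(δ²/(4κ) − cR²) + Q_N(x)` whenever `(1/N)∑(xₖ−x̄)² ≤ R²` and `δ ≤ x̄² ≤ (1−δ)/2`. -/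
theorem stmt_18 (μ : ℝ) (hμ : 1 < μ) (δ : ℝ) (hδ0 : 0 < δ) (hδ3 : δ < 1 / 3)
    (κ : ℝ) (hκ : κ = min (δ / 2) (μ - 1)) :
    ∃ c : ℝ, ∀ N : ℕ, ∀ hN : N ≠ 0, ∀ R : ℝ, 0 < R →
      ∀ x : EuclideanSpace ℝ (Fin N),
        (1 / N : ℝ) * ∑ k, (x k - avg N x) ^ 2 ≤ R ^ 2 →
        δ ≤ avg N x ^ 2 → avg N x ^ 2 ≤ 1 / 2 * (1 - δ) →
        GN μ κ N hN x ≥ N * (δ ^ 2 / (4 * κ) - c * R ^ 2) + QN μ κ N hN x := by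
  have hκδ : κ ≤ δ / 2 := by rw [hκ]; exact min_le_left _ _
  have hκ0 : 0 < κ := by rw [hκ]; exact lt_min (by linarith) (by linarith)
  refine ⟨1 / (2 * κ ^ 2) + 3 * (2 + κ) / (4 * κ), ?_⟩
  intro N hN R hR x hvar hml hmu
  haveI : NeZero N := ⟨hN⟩
  have hn0 : (0:ℝ) < N := by exact_mod_cast Nat.pos_of_ne_zero hN
  have hS2R : (∑ k, (x k - avg N x) ^ 2) ≤ (N : ℝ) * R ^ 2 := by
    rw [one_div, inv_mul_eq_div, div_le_iff₀ hn0] at hvar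
    linarith
  have hS2n : (0:ℝ) ≤ ∑ k, (x k - avg N x) ^ 2 :=
    Finset.sum_nonneg fun k _ => sq_nonneg _
  have hS4n : (0:ℝ) ≤ ∑ k, (x k - avg N x) ^ 4 :=
    Finset.sum_nonneg fun k _ => by positivity
  have hAM : avg N x * ∑ k, (x k - avg N x) ^ 3
      ≤ 1 / κ * avg N x ^ 2 * (∑ k, (x k - avg N x) ^ 2)
        + κ / 4 * ∑ k, (x k - avg N x) ^ 4 := by
    have hpt : ∀ k ∈ Finset.univ, avg N x * (x k - avg N x) ^ 3
        ≤ 1 / κ * avg N x ^ 2 * (x k - avg N x) ^ 2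
          + κ / 4 * (x k - avg N x) ^ 4 := by
      intro k _
      have h4 : 0 ≤ 4 * avg N x ^ 2 * (x k - avg N x) ^ 2
          + κ ^ 2 * (x k - avg N x) ^ 4
          - 4 * κ * (avg N x * (x k - avg N x) ^ 3) := by
        nlinarith [sq_nonneg (κ * (x k - avg N x) ^ 2 - 2 * avg N x * (x k - avg N x))]
      have he : 1 / κ * avg N x ^ 2 * (x k - avg N x) ^ 2
            + κ / 4 * (x k - avg N x) ^ 4 - avg N x * (x k - avg N x) ^ 3
          = (1 / (4 * κ)) * (4 * avg N x ^ 2 * (x k - avg N x) ^ 2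
            + κ ^ 2 * (x k - avg N x) ^ 4
            - 4 * κ * (avg N x * (x k - avg N x) ^ 3)) := by
        field_simp
      nlinarith [mul_nonneg (le_of_lt (by positivity : (0:ℝ) < 1 / (4 * κ))) h4]
    have hs := Finset.sum_le_sum hpt
    rw [← Finset.mul_sum, Finset.sum_add_distrib, ← Finset.mul_sum, ← Finset.mul_sum] at hs
    exact hs
  rw [GN_sub_QN κ (ne_of_gt hκ0) hN x]
  have main := scalar_ineq κ δ R (avg N x) (∑ k, (x k - avg N x) ^ 2)
    (∑ k, (x k - avg N x) ^ 3) (∑ k, (x k - avg N x) ^ 4) (N : ℝ)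
    hκ0 hκδ hδ0 hδ3 hS2n hS4n hS2R hml hmu hn0.le hAM
  have hm4 : avg N x / κ * (∑ k, (x k - avg N x) ^ 3)
      = avg N x / κ * (∑ k, (x k - avg N x) ^ 3) := rfl
  linarith [main]
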